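/- Fix n ≥ 2, distinct unary atoms p₁, …, pₙ, and a binary atom r. Let Γ be the set of R-formulas consisting of: ∀(pᵢ, ∃(p_{i+1}, r)) for all 1 ≤ i < n; ∀(p₁, ∀(pₙ, r)); ∀(p, p) for every unary atom p; and ∀(pᵢ, p̄ⱼ) for all 1 ≤ i < j ≤ n. For 1 ≤ i < n, let Δᵢ = Γ ∖ {∀(pᵢ, ∃(p_{i+1}, r))}. Then for every 1 ≤ i < n and every R-formula φ, if Δᵢ ⊨ φ then φ ∈ Γ. -/

import Mathlib

/-!
Syllogistic logics (Pratt-Hartmann & Moss, "Logics for the Relational Syllogistic").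

Unary atoms and binary atoms are encoded by `ℕ` (two disjoint copies).
-/

namespace Syllogistic

/-- Unary literals: a unary atom `p` or its negation `p̄`. -/
inductive Lit : Type
  | pos : ℕ → Lit
  | neg : ℕ → Lit
deriving DecidableEq

/-- Binary literals: a binary atom `r` or its negation `r̄`. -/
inductive BLit : Type
  | pos : ℕ → BLit
  | neg : ℕ → BLit
deriving DecidableEq

/-- Bar (negation) on unary literals. -/
def Lit.bar : Lit → Lit
  | .pos p => .neg p
  | .neg p => .pos p

/-- Bar (negation) on binary literals. -/
def BLit.bar : BLit → BLit
  | .pos r => .neg r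
  | .neg r => .pos r

/-- A unary literal is positive if it is an atom. -/
def Lit.isPos : Lit → Prop
  | .pos _ => True
  | .neg _ => False

/-- A binary literal is positive if it is an atom. -/
def BLit.isPos : BLit → Prop
  | .pos _ => True
  | .neg _ => False

/-- e-terms: a unary literal `l`, or `∃(l,t)`, or `∀(l,t)`. -/
inductive ETerm : Type
  | lit : Lit → ETerm
  | ex : Lit → BLit → ETerm
  | al : Lit → BLit → ETerm
deriving DecidableEq

/-- The e-term consisting of a single positive unary atom. -/
def atomE (p : ℕ) : ETerm := .lit (.pos p)

/-- Bar on e-terms: `∀(l,t)‾ = ∃(l,t̄)` and `∃(l,t)‾ = ∀(l,t̄)`. -/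
def ETerm.bar : ETerm → ETerm
  | .lit l => .lit l.bar
  | .ex l t => .al l t.bar
  | .al l t => .ex l t.bar

/-- c-terms: a unary literal, or `∃(p,t)`/`∀(p,t)` with `p` a unary atom. -/
def ETerm.isC : ETerm → Prop
  | .lit _ => True
  | .ex l _ => l.isPos
  | .al l _ => l.isPos

/-- Positive c-terms: the literals occurring in them are positive. -/
def ETerm.isPosC : ETerm → Prop
  | .lit l => l.isPos
  | .ex l t => l.isPos ∧ t.isPos
  | .al l t => l.isPos ∧ t.isPos

/-- R*†-formulas: `∃(e,f)` or `∀(e,f)` for e-terms `e`, `f`. -/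
inductive Formula : Type
  | ex : ETerm → ETerm → Formula
  | al : ETerm → ETerm → Formula
deriving DecidableEq

/-- Negation of a formula: `∀(e,f)‾ = ∃(e,f̄)`, `∃(e,f)‾ = ∀(e,f̄)`. -/
def Formula.bar : Formula → Formula
  | .ex e f => .al e f.bar
  | .al e f => .ex e f.bar

/-- The silent identification: `∃(e,f)` with `∃(f,e)`, and `∀(e,f)` with `∀(f̄,ē)`. -/
def Formula.swap : Formula → Formula
  | .ex e f => .ex f e
  | .al e f => .al f.bar e.bar

/-- Two formulas are identified if they are equal or are swaps of each other. -/
def FormEquiv (φ ψ : Formula) : Prop := ψ = φ ∨ ψ = φ.swap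

/-- An absurdity is a formula of the form `∃(e,ē)`. -/
def IsAbsurd (φ : Formula) : Prop := ∃ e : ETerm, φ = .ex e e.bar

/-- A substitution maps unary atoms to unary atoms and binary atoms to binary atoms. -/
structure Subst where
  u : ℕ → ℕ
  b : ℕ → ℕ

def Lit.subst (g : Subst) : Lit → Lit
  | .pos p => .pos (g.u p)
  | .neg p => .neg (g.u p)

def BLit.subst (g : Subst) : BLit → BLit
  | .pos r => .pos (g.b r)
  | .neg r => .neg (g.b r)

def ETerm.subst (g : Subst) : ETerm → ETerm
  | .lit l => .lit (l.subst g)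
  | .ex l t => .ex (l.subst g) (t.subst g)
  | .al l t => .al (l.subst g) (t.subst g)

/-- Atom-wise application of a substitution to a formula. -/
def Formula.subst (g : Subst) : Formula → Formula
  | .ex e f => .ex (e.subst g) (f.subst g)
  | .al e f => .al (e.subst g) (f.subst g)

/-- A structure over a domain `A`: an interpretation of every unary atom as a
subset of `A` and of every binary atom as a binary relation on `A`.
(Non-emptiness of the domain is imposed where structures are quantified over.) -/
structure Interp (A : Type) where
  up : ℕ → Set A
  br : ℕ → Set (A × A)

def Interp.litI {A : Type} (M : Interp A) : Lit → Set A
  | .pos p => M.up p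
  | .neg p => (M.up p)ᶜ

def Interp.blitI {A : Type} (M : Interp A) : BLit → Set (A × A)
  | .pos r => M.br r
  | .neg r => (M.br r)ᶜ

/-- Interpretation of e-terms. -/
def Interp.etermI {A : Type} (M : Interp A) : ETerm → Set A
  | .lit l => M.litI l
  | .ex l t => {a | ∃ b ∈ M.litI l, (a, b) ∈ M.blitI t}
  | .al l t => {a | ∀ b ∈ M.litI l, (a, b) ∈ M.blitI t}

/-- Truth of a formula in a structure. -/
def Interp.Sat {A : Type} (M : Interp A) : Formula → Prop
  | .al e f => M.etermI e ⊆ M.etermI f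
  | .ex e f => (M.etermI e ∩ M.etermI f).Nonempty

/-- Truth of a set of formulas in a structure. -/
def Interp.SatSet {A : Type} (M : Interp A) (Θ : Set Formula) : Prop :=
  ∀ θ ∈ Θ, M.Sat θ

/-- `Θ ⊨ θ`: every structure (with non-empty domain) satisfying `Θ` satisfies `θ`. -/
def Entails (Θ : Set Formula) (θ : Formula) : Prop :=
  ∀ (A : Type), Nonempty A → ∀ M : Interp A, M.SatSet Θ → M.Sat θ

/-- `Θ` is satisfied in some structure with non-empty domain. -/
def Satisfiable (Θ : Set Formula) : Prop :=
  ∃ (A : Type), Nonempty A ∧ ∃ M : Interp A, M.SatSet Θ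

/-- A syllogistic rule: a finite set of antecedents together with a consequent. -/
structure SylRule where
  ants : Finset Formula
  con : Formula

/-- A rule is sound if its antecedents entail its consequent. -/
def SylRule.Sound (R : SylRule) : Prop := Entails (↑R.ants) R.con

/-- A rule is a rule *in* the fragment `F` if all its formulas lie in `F`. -/
def RuleIn (F : Set Formula) (R : SylRule) : Prop :=
  (∀ ψ ∈ R.ants, ψ ∈ F) ∧ R.con ∈ F

/-- The instance of a rule under a substitution. -/
def SylRule.inst (g : Subst) (R : SylRule) : SylRule :=
  ⟨R.ants.image (Formula.subst g), R.con.subst g⟩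

/-- Two rules are the same modulo the identification of formulas. -/
def RuleEquiv (R R' : SylRule) : Prop :=
  (∀ ψ ∈ R.ants, ∃ ψ' ∈ R'.ants, FormEquiv ψ ψ') ∧
  (∀ ψ' ∈ R'.ants, ∃ ψ ∈ R.ants, FormEquiv ψ ψ') ∧
  FormEquiv R.con R'.con

/-- The direct derivation relation `⊢_X` determined by a set `X` of syllogistic
rules: premises may be used, and instances of rules applied; formulas are
treated up to the silent identification. -/
inductive Derives (X : Set SylRule) : Set Formula → Formula → Prop
  | mem {Θ : Set Formula} {θ : Formula} : θ ∈ Θ → Derives X Θ θ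
  | rule {Θ : Set Formula} (R : SylRule) (g : Subst) :
      R ∈ X → (∀ ψ ∈ R.ants, Derives X Θ (ψ.subst g)) →
      Derives X Θ (R.con.subst g)
  | ident {Θ : Set Formula} {φ ψ : Formula} :
      Derives X Θ φ → FormEquiv φ ψ → Derives X Θ ψ

/-- The indirect derivation relation `⊩_X`: as `⊢_X`, together with
*reductio ad absurdum*. -/
inductive IDerives (X : Set SylRule) : Set Formula → Formula → Prop
  | mem {Θ : Set Formula} {θ : Formula} : θ ∈ Θ → IDerives X Θ θ
  | rule {Θ : Set Formula} (R : SylRule) (g : Subst) :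
      R ∈ X → (∀ ψ ∈ R.ants, IDerives X Θ (ψ.subst g)) →
      IDerives X Θ (R.con.subst g)
  | ident {Θ : Set Formula} {φ ψ : Formula} :
      IDerives X Θ φ → FormEquiv φ ψ → IDerives X Θ ψ
  | raa {Θ : Set Formula} {θ b : Formula} :
      IsAbsurd b → IDerives X (Θ ∪ {θ.bar}) b → IDerives X Θ θ

/-- Soundness of a derivation relation for the fragment `F`. -/
def SoundFor (F : Set Formula) (D : Set Formula → Formula → Prop) : Prop :=
  ∀ (Θ : Set Formula) (θ : Formula), Θ ⊆ F → θ ∈ F → D Θ θ → Entails Θ θ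

/-- Completeness of a derivation relation for the fragment `F`. -/
def CompleteFor (F : Set Formula) (D : Set Formula → Formula → Prop) : Prop :=
  ∀ (Θ : Set Formula) (θ : Formula), Θ ⊆ F → θ ∈ F → Entails Θ θ → D Θ θ

/-- Refutation-completeness for the fragment `F`: every unsatisfiable set of
`F`-formulas derives some absurdity. -/
def RefutationCompleteFor (F : Set Formula) (D : Set Formula → Formula → Prop) : Prop :=
  ∀ Θ : Set Formula, Θ ⊆ F → ¬ Satisfiable Θ → ∃ b, IsAbsurd b ∧ D Θ b

/-- Consistency of a set of formulas with respect to `⊩_X`. -/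
def Consistent (X : Set SylRule) (Θ : Set Formula) : Prop :=
  ¬ ∃ b, IsAbsurd b ∧ IDerives X Θ b

/-! ### The six fragments -/

/-- The fragment `S`: `∃(p,l)`, `∃(l,p)`, `∀(p,l)`, `∀(l,p̄)`. -/
def FragS : Set Formula :=
  {φ | (∃ (p : ℕ) (l : Lit), φ = .ex (atomE p) (.lit l)) ∨
       (∃ (p : ℕ) (l : Lit), φ = .ex (.lit l) (atomE p)) ∨
       (∃ (p : ℕ) (l : Lit), φ = .al (atomE p) (.lit l)) ∨
       (∃ (p : ℕ) (l : Lit), φ = .al (.lit l) (.lit (.neg p)))}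

/-- The fragment `S†`: `∃(l,m)`, `∀(l,m)` for unary literals `l`, `m`. -/
def FragSdag : Set Formula :=
  {φ | ∃ l m : Lit, φ = .ex (.lit l) (.lit m) ∨ φ = .al (.lit l) (.lit m)}

/-- The fragment `R`: `∃(p,c)`, `∃(c,p)`, `∀(p,c)`, `∀(c,p̄)` for a c-term `c`. -/
def FragR : Set Formula :=
  {φ | ∃ (p : ℕ) (c : ETerm), c.isC ∧
       (φ = .ex (atomE p) c ∨ φ = .ex c (atomE p) ∨
        φ = .al (atomE p) c ∨ φ = .al c (.lit (.neg p)))}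

/-- The fragment `R†`: `∃(l,e)`, `∃(e,l)`, `∀(l,e)`, `∀(e,l)` for an e-term `e`. -/
def FragRdag : Set Formula :=
  {φ | ∃ (l : Lit) (e : ETerm),
       φ = .ex (.lit l) e ∨ φ = .ex e (.lit l) ∨
       φ = .al (.lit l) e ∨ φ = .al e (.lit l)}

/-- The fragment `R*`: `∃(c⁺,d)`, `∃(d,c⁺)`, `∀(c⁺,d)`, `∀(d,c⁺‾)` with `c⁺` a
positive c-term and `d` a c-term. -/
def FragRstar : Set Formula :=
  {φ | ∃ c d : ETerm, c.isPosC ∧ d.isC ∧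
       (φ = .ex c d ∨ φ = .ex d c ∨ φ = .al c d ∨ φ = .al d c.bar)}

/-- The fragment `R*†`: all formulas. -/
def FragRstardag : Set Formula := Set.univ

/-- The six syllogistic fragments. -/
def IsFragment (F : Set Formula) : Prop :=
  F = FragS ∨ F = FragSdag ∨ F = FragR ∨ F = FragRdag ∨ F = FragRstar ∨ F = FragRstardag

/-! ### Rule sets -/

/-- The rule set `S`: (D1), (D2), (D3), (B), (A), (T), (I), (X). -/
def RuleSetS : Set SylRule :=
  {R | (∃ (p q : ℕ) (l : Lit),
          R = ⟨{.al (atomE q) (.lit l), .ex (atomE p) (atomE q)}, .ex (atomE p) (.lit l)⟩) ∨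
       (∃ (p q : ℕ) (l : Lit),
          R = ⟨{.ex (atomE p) (.lit l), .al (atomE p) (atomE q)}, .ex (atomE q) (.lit l)⟩) ∨
       (∃ (p q : ℕ) (l : Lit),
          R = ⟨{.al (atomE q) (.lit l.bar), .ex (atomE p) (.lit l)}, .ex (atomE p) (.lit (.neg q))⟩) ∨
       (∃ (p q : ℕ) (l : Lit),
          R = ⟨{.al (atomE p) (atomE q), .al (atomE q) (.lit l)}, .al (atomE p) (.lit l)⟩) ∨
       (∃ (p : ℕ) (l : Lit),
          R = ⟨{.al (atomE p) (.lit (.neg p))}, .al (atomE p) (.lit l)⟩) ∨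
       (∃ p : ℕ, R = ⟨∅, .al (atomE p) (atomE p)⟩) ∨
       (∃ (p : ℕ) (l : Lit),
          R = ⟨{.ex (atomE p) (.lit l)}, .ex (atomE p) (atomE p)⟩) ∨
       (∃ φ ψ : Formula, φ ∈ FragS ∧ ψ ∈ FragS ∧ R = ⟨{ψ, ψ.bar}, φ⟩)}

/-- The rule set `S†`: (D), (B), (A), (T), (I), (N), (X). -/
def RuleSetSdag : Set SylRule :=
  {R | (∃ l m n : Lit,
          R = ⟨{.ex (.lit l) (.lit n), .al (.lit l) (.lit m)}, .ex (.lit m) (.lit n)⟩) ∨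
       (∃ l m n : Lit,
          R = ⟨{.al (.lit l) (.lit m), .al (.lit m) (.lit n)}, .al (.lit l) (.lit n)⟩) ∨
       (∃ l m : Lit, R = ⟨{.al (.lit l) (.lit l.bar)}, .al (.lit l) (.lit m)⟩) ∨
       (∃ l : Lit, R = ⟨∅, .al (.lit l) (.lit l)⟩) ∨
       (∃ l m : Lit, R = ⟨{.ex (.lit l) (.lit m)}, .ex (.lit l) (.lit l)⟩) ∨
       (∃ l : Lit, R = ⟨{.al (.lit l.bar) (.lit l)}, .ex (.lit l) (.lit l)⟩) ∨
       (∃ φ ψ : Formula, φ ∈ FragSdag ∧ ψ ∈ FragSdag ∧ R = ⟨{ψ, ψ.bar}, φ⟩)}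

/-- The rules (B), (T) and (A) of the rule set `S†`. -/
def RuleSetBTA : Set SylRule :=
  {R | (∃ l m n : Lit,
          R = ⟨{.al (.lit l) (.lit m), .al (.lit m) (.lit n)}, .al (.lit l) (.lit n)⟩) ∨
       (∃ l : Lit, R = ⟨∅, .al (.lit l) (.lit l)⟩) ∨
       (∃ l m : Lit, R = ⟨{.al (.lit l) (.lit l.bar)}, .al (.lit l) (.lit m)⟩)}

/-- The rule set `R`: (D1), (D2), (D3), (B), (T), (I), (A), (II), (∀∀), (∃∃), (∀∃). -/
def RuleSetR : Set SylRule :=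
  {R | (∃ (p q : ℕ) (c : ETerm), c.isC ∧
          R = ⟨{.ex (atomE p) (atomE q), .al (atomE q) c}, .ex (atomE p) c⟩) ∨
       (∃ (p q : ℕ) (c : ETerm), c.isC ∧
          R = ⟨{.al (atomE p) (atomE q), .ex (atomE p) c}, .ex (atomE q) c⟩) ∨
       (∃ (p q : ℕ) (c : ETerm), c.isC ∧
          R = ⟨{.al (atomE q) c.bar, .ex (atomE p) c}, .ex (atomE p) (.lit (.neg q))⟩) ∨
       (∃ (p q : ℕ) (c : ETerm), c.isC ∧
          R = ⟨{.al (atomE p) (atomE q), .al (atomE q) c}, .al (atomE p) c⟩) ∨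
       (∃ p : ℕ, R = ⟨∅, .al (atomE p) (atomE p)⟩) ∨
       (∃ (p : ℕ) (c : ETerm), c.isC ∧
          R = ⟨{.ex (atomE p) c}, .ex (atomE p) (atomE p)⟩) ∨
       (∃ (p : ℕ) (c : ETerm), c.isC ∧
          R = ⟨{.al (atomE p) (.lit (.neg p))}, .al (atomE p) c⟩) ∨
       (∃ (p q : ℕ) (t : BLit),
          R = ⟨{.ex (atomE p) (.ex (.pos q) t)}, .ex (atomE q) (atomE q)⟩) ∨
       (∃ (p q q' : ℕ) (t : BLit),
          R = ⟨{.al (atomE p) (.al (.pos q') t), .ex (atomE q) (atomE q')},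
               .al (atomE p) (.ex (.pos q) t)⟩) ∨
       (∃ (p q q' : ℕ) (t : BLit),
          R = ⟨{.ex (atomE p) (.ex (.pos q) t), .al (atomE q) (atomE q')},
               .ex (atomE p) (.ex (.pos q') t)⟩) ∨
       (∃ (p q q' : ℕ) (t : BLit),
          R = ⟨{.al (atomE p) (.ex (.pos q) t), .al (atomE q) (atomE q')},
               .al (atomE p) (.ex (.pos q') t)⟩)}

/-- The rule set `R*`: (T), (I), (B), (D1), (D2), (J), (K), (L), (II), (Z), (W). -/
def RuleSetRstar : Set SylRule :=
  {R | (∃ c : ETerm, c.isPosC ∧ R = ⟨∅, .al c c⟩) ∨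
       (∃ c d : ETerm, c.isPosC ∧ d.isC ∧ R = ⟨{.ex c d}, .ex c c⟩) ∨
       (∃ b c d : ETerm, b.isPosC ∧ c.isPosC ∧ d.isC ∧
          R = ⟨{.al b c, .al c d}, .al b d⟩) ∨
       (∃ b c d : ETerm, b.isPosC ∧ c.isPosC ∧ d.isC ∧
          R = ⟨{.ex b c, .al c d}, .ex b d⟩) ∨
       (∃ b c d : ETerm, b.isPosC ∧ c.isPosC ∧ d.isC ∧
          R = ⟨{.al b c, .ex b d}, .ex c d⟩) ∨
       (∃ p q r : ℕ,
          R = ⟨{.al (atomE p) (atomE q)},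
               .al (.al (.pos q) (.pos r)) (.al (.pos p) (.pos r))⟩) ∨
       (∃ p q r : ℕ,
          R = ⟨{.al (atomE p) (atomE q)},
               .al (.ex (.pos p) (.pos r)) (.ex (.pos q) (.pos r))⟩) ∨
       (∃ p q r : ℕ,
          R = ⟨{.ex (atomE p) (atomE q)},
               .al (.al (.pos p) (.pos r)) (.ex (.pos q) (.pos r))⟩) ∨
       (∃ p q r : ℕ,
          R = ⟨{.ex (atomE q) (.ex (.pos p) (.pos r))}, .ex (atomE p) (atomE p)⟩) ∨
       (∃ (p r : ℕ) (c : ETerm), c.isPosC ∧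
          R = ⟨{.al (atomE p) (.lit (.neg p))}, .al c (.al (.pos p) (.pos r))⟩) ∨
       (∃ p r : ℕ,
          R = ⟨{.al (atomE p) (.lit (.neg p))},
               .ex (.al (.pos p) (.pos r)) (.al (.pos p) (.pos r))⟩)}

/-! ### Auxiliary notions for particular statements -/

/-- Universal S†-formulas. -/
def IsUnivSdag (φ : Formula) : Prop := ∃ l m : Lit, φ = .al (.lit l) (.lit m)

/-- Existential S†-formulas. -/
def IsExSdag (φ : Formula) : Prop := ∃ l m : Lit, φ = .ex (.lit l) (.lit m)

/-- The closure `V^Φ` of a set of unary literals: all `m` with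
`Φ ⊢_BTA ∀(l,m)` for some `l ∈ V`. -/
def litClosure (Φ : Set Formula) (V : Set Lit) : Set Lit :=
  {m | ∃ l ∈ V, Derives RuleSetBTA Φ (.al (.lit l) (.lit m))}

/-- Membership in a set of formulas, modulo the silent identification. -/
def MemMod (Γ : Set Formula) (φ : Formula) : Prop := ∃ ψ ∈ Γ, FormEquiv φ ψ

/-- The reachability relation `c ⇒ d` determined by `Γ`. -/
def Reach (Γ : Set Formula) (c d : ETerm) : Prop :=
  c = d ∨ ∃ (k : ℕ) (p : ℕ → ℕ), c = atomE (p 0) ∧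
    MemMod Γ (.al (atomE (p k)) d) ∧
    ∀ i < k, MemMod Γ (.al (atomE (p i)) (atomE (p (i + 1))))

/-- `V ⇒ d` for a set `V` of c-terms. -/
def ReachSet (Γ : Set Formula) (V : Set ETerm) (d : ETerm) : Prop :=
  ∃ c ∈ V, Reach Γ c d

/-- The witness sets `B_k`; the formal object `b_{V,i}` is encoded as the
pair `(V, i)`. -/
def BSet (Γ : Set Formula) : ℕ → Set (Set ETerm × ℕ)
  | 0 => {x | ∃ (p : ℕ) (c : ETerm), c.isC ∧ MemMod Γ (.ex (atomE p) c) ∧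
            x = ({atomE p, c}, 0)}
  | k + 1 => BSet Γ k ∪
      {x | ∃ (p i : ℕ), (i = 1 ∨ i = 2) ∧
        (∃ y ∈ BSet Γ k, ∃ t : BLit, ReachSet Γ y.1 (.ex (.pos p) t)) ∧
        x = ({atomE p}, i)}

/-- The witness set `B = ⋃_k B_k`. -/
def BAll (Γ : Set Formula) : Set (Set ETerm × ℕ) := ⋃ k, BSet Γ k

/-- Condition (C). -/
def CondC (Γ : Set Formula) : Prop :=
  ∃ (V : Set ETerm) (i : ℕ) (W : Set ETerm) (j : ℕ),
    (V, i) ∈ BAll Γ ∧ (W, j) ∈ BAll Γ ∧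
    ∃ q o r : ℕ,
      ((ReachSet Γ V (atomE q) ∧ ReachSet Γ V (.lit (.neg q))) ∨
       (ReachSet Γ V (.ex (.pos q) (.neg r)) ∧ ReachSet Γ V (.al (.pos o) (.pos r)) ∧
         Reach Γ (atomE q) (atomE o)) ∨
       (ReachSet Γ V (.al (.pos q) (.neg r)) ∧ ReachSet Γ V (.ex (.pos o) (.pos r)) ∧
         Reach Γ (atomE o) (atomE q)) ∨
       (ReachSet Γ V (.al (.pos q) (.neg r)) ∧ ReachSet Γ V (.al (.pos o) (.pos r)) ∧
         ReachSet Γ W (atomE q) ∧ ReachSet Γ W (atomE o)))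

/-- The set `Γ` of R-formulas used in the proof that `R` admits no sound
and complete direct syllogistic system (indices `0,…,n-1`). -/
def GammaSet (n : ℕ) (p : ℕ → ℕ) (r : ℕ) : Set Formula :=
  {φ | (∃ i, i + 1 < n ∧ φ = .al (atomE (p i)) (.ex (.pos (p (i + 1))) (.pos r))) ∨
       φ = .al (atomE (p 0)) (.al (.pos (p (n - 1))) (.pos r)) ∨
       (∃ q : ℕ, φ = .al (atomE q) (atomE q)) ∨
       (∃ i j, i < j ∧ j < n ∧ φ = .al (atomE (p i)) (.lit (.neg (p j))))}

/-- `Γ` is R*-complete: for every R*-formula `θ`, `θ ∈ Γ` or `θ̄ ∈ Γ`. -/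
def RstarComplete (Γ : Set Formula) : Prop :=
  ∀ θ ∈ FragRstar, θ ∈ Γ ∨ Formula.bar θ ∈ Γ

/-- Domain of the canonical structure for `Γ`: triples `(c₁,c₂,Q)` of two
positive c-terms and a quantifier (`Bool`, with `true` rendering `∃` and
`false` rendering `∀`) such that `Γ ⊩_{R*} ∃(c₁,c₂)`. -/
abbrev CanonA (Γ : Set Formula) : Type :=
  {x : ETerm × ETerm × Bool //
    x.1.isPosC ∧ x.2.1.isPosC ∧ IDerives RuleSetRstar Γ (.ex x.1 x.2.1)}

/-- The canonical structure constructed from `Γ`. -/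
def CanonInterp (Γ : Set Formula) : Interp (CanonA Γ) where
  up p := {x | IDerives RuleSetRstar Γ (.al x.val.1 (atomE p)) ∨
               IDerives RuleSetRstar Γ (.al x.val.2.1 (atomE p))}
  br r := {ab |
      (∃ c ∈ ({ab.1.val.1, ab.1.val.2.1} : Set ETerm),
       ∃ d ∈ ({ab.2.val.1, ab.2.val.2.1} : Set ETerm),
       ∃ q : ℕ,
         IDerives RuleSetRstar Γ (.al c (.al (.pos q) (.pos r))) ∧
         IDerives RuleSetRstar Γ (.al d (atomE q))) ∨
      (ab.2.val.2.2 = true ∧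
       ∃ q : ℕ, ab.2.val.1 = atomE q ∧ ab.2.val.2.1 = atomE q ∧
       ∃ c ∈ ({ab.1.val.1, ab.1.val.2.1} : Set ETerm),
         IDerives RuleSetRstar Γ (.al c (.ex (.pos q) (.pos r))))}

/-! ### Auxiliary material for Statement 14 -/

section Statement14

open Set

lemma Lit.bar_bar (l : Lit) : l.bar.bar = l := by cases l <;> rfl
lemma BLit.bar_bar (t : BLit) : t.bar.bar = t := by cases t <;> rfl
lemma ETerm.bar_bar (e : ETerm) : e.bar.bar = e := by
  cases e <;> simp [ETerm.bar, Lit.bar_bar, BLit.bar_bar]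
lemma Formula.swap_swap (φ : Formula) : φ.swap.swap = φ := by
  cases φ <;> simp [Formula.swap, ETerm.bar_bar]
lemma ETerm.isC_bar {e : ETerm} (h : e.isC) : e.bar.isC := by
  cases e <;> simpa [ETerm.bar, ETerm.isC] using h

lemma Interp.blitI_bar {A : Type} (M : Interp A) (t : BLit) :
    M.blitI t.bar = (M.blitI t)ᶜ := by
  cases t <;> simp [BLit.bar, Interp.blitI]

lemma Interp.etermI_bar {A : Type} (M : Interp A) (e : ETerm) :
    M.etermI e.bar = (M.etermI e)ᶜ := by
  cases e with
  | lit l => cases l <;> simp [ETerm.bar, Lit.bar, Interp.etermI, Interp.litI]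
  | ex l t =>
    ext a
    simp only [ETerm.bar, Interp.etermI, Interp.blitI_bar, Set.mem_setOf_eq,
      Set.mem_compl_iff]
    constructor
    · intro hall ⟨b, hb, ht⟩
      exact hall b hb ht
    · intro hne b hb ht
      exact hne ⟨b, hb, ht⟩
  | al l t =>
    ext a
    simp only [ETerm.bar, Interp.etermI, Interp.blitI_bar, Set.mem_setOf_eq,
      Set.mem_compl_iff]
    constructor
    · rintro ⟨b, hb, hnt⟩ hall
      exact hnt (hall b hb)
    · intro hna
      by_contra hc
      apply hna
      intro b hb
      by_contra hn
      exact hc ⟨b, hb, hn⟩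

/-- Generic unary-atom interpretation for counter-models: the atom `p j`
(`j < n`) is interpreted as `P j`, every other unary atom `x` as `ν x`. -/
def cUp (n : ℕ) (p : ℕ → ℕ) (P ν : ℕ → Set ℕ) (x : ℕ) : Set ℕ :=
  {a | (∃ j, j < n ∧ x = p j ∧ a ∈ P j) ∨ ((∀ j, j < n → x ≠ p j) ∧ a ∈ ν x)}

/-- Generic counter-model: `r` is interpreted as `R0`, other binary atoms as `Rd`. -/
def cM (n : ℕ) (p : ℕ → ℕ) (r : ℕ) (P ν : ℕ → Set ℕ) (R0 Rd : Set (ℕ × ℕ)) :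
    Interp ℕ where
  up := cUp n p P ν
  br s := if s = r then R0 else Rd

/-- The chain relation: edges `(j, j+1)` for `j + 1 < n`, plus `(0, n-1)`. -/
def chainE (n : ℕ) : Set (ℕ × ℕ) :=
  {x | (x.2 = x.1 + 1 ∧ x.2 < n) ∨ (x.1 = 0 ∧ x.2 = n - 1)}

/-- The relation for the model with a duplicated point `n` in `p k`. -/
def rD (n k : ℕ) : Set (ℕ × ℕ) :=
  {x | (x.2 = x.1 + 1 ∧ x.2 < n) ∨ (x.1 = 0 ∧ x.2 = n - 1) ∨
       (x.1 = n ∧ x.2 = k + 1 ∧ k + 1 < n) ∨ (x.1 = 0 ∧ x.2 = n ∧ k = n - 1)}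

/-- The relation for the truncated-chain model. -/
def rOne (i : ℕ) : Set (ℕ × ℕ) := {x | x.2 = x.1 + 1 ∧ x.2 ≤ i}

lemma cUp_p {n : ℕ} {p : ℕ → ℕ} (hp : ∀ i < n, ∀ j < n, p i = p j → i = j)
    (P ν : ℕ → Set ℕ) {j : ℕ} (hj : j < n) : cUp n p P ν (p j) = P j := by
  ext a
  simp only [cUp, Set.mem_setOf_eq]
  constructor
  · rintro (⟨k, hk, he, ha⟩ | ⟨hno, _⟩)
    · rwa [hp j hj k hk he]
    · exact absurd rfl (hno j hj)
  · exact fun ha => Or.inl ⟨j, hj, rfl, ha⟩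

lemma cUp_np {n : ℕ} {p : ℕ → ℕ} (P ν : ℕ → Set ℕ) {x : ℕ}
    (hx : ∀ j, j < n → x ≠ p j) : cUp n p P ν x = ν x := by
  ext a
  simp only [cUp, Set.mem_setOf_eq]
  constructor
  · rintro (⟨k, hk, he, _⟩ | ⟨_, ha⟩)
    · exact absurd he (hx k hk)
    · exact ha
  · exact fun ha => Or.inr ⟨hx, ha⟩

/-- The generic model satisfies `Δᵢ` provided the `P j` are pairwise disjoint,
the chain condition holds for `j ≠ i`, and `P 0 × P (n-1) ⊆ R0`. -/
lemma cM_satDelta {n : ℕ} {p : ℕ → ℕ} (r : ℕ) (hn : 2 ≤ n)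
    (hp : ∀ i < n, ∀ j < n, p i = p j → i = j) (i : ℕ)
    (P ν : ℕ → Set ℕ) (R0 Rd : Set (ℕ × ℕ))
    (h1 : ∀ j, j + 1 < n → j ≠ i → ∀ a ∈ P j, ∃ b ∈ P (j + 1), (a, b) ∈ R0)
    (h2 : ∀ a ∈ P 0, ∀ b ∈ P (n - 1), (a, b) ∈ R0)
    (h3 : ∀ j k, j < k → k < n → ∀ a ∈ P j, a ∉ P k) :
    (cM n p r P ν R0 Rd).SatSet
      (GammaSet n p r \
        {Formula.al (atomE (p i)) (ETerm.ex (Lit.pos (p (i + 1))) (BLit.pos r))}) := by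
  rintro θ ⟨hθ, hne⟩
  simp only [GammaSet, Set.mem_setOf_eq] at hθ
  rcases hθ with ⟨j, hj, rfl⟩ | rfl | ⟨q, rfl⟩ | ⟨j, k, hjk, hk, rfl⟩
  · -- chain formula, j ≠ i
    have hji : j ≠ i := by
      rintro rfl
      exact hne rfl
    intro a ha
    have ha' : a ∈ P j := by
      rwa [show (cM n p r P ν R0 Rd).etermI (atomE (p j)) = cUp n p P ν (p j) from rfl,
        cUp_p hp P ν (Nat.lt_of_succ_lt hj)] at ha
    obtain ⟨b, hb, hab⟩ := h1 j hj hji a ha'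
    refine ⟨b, ?_, ?_⟩
    · rw [show (cM n p r P ν R0 Rd).litI (Lit.pos (p (j + 1))) = cUp n p P ν (p (j + 1))
        from rfl, cUp_p hp P ν hj]
      exact hb
    · show (a, b) ∈ (if r = r then R0 else Rd)
      rwa [if_pos rfl]
  · -- ∀(p 0, ∀(p (n-1), r))
    intro a ha b hb
    have ha' : a ∈ P 0 := by
      rwa [show (cM n p r P ν R0 Rd).etermI (atomE (p 0)) = cUp n p P ν (p 0) from rfl,
        cUp_p hp P ν (by omega)] at ha
    have hb' : b ∈ P (n - 1) := by
      rwa [show (cM n p r P ν R0 Rd).litI (Lit.pos (p (n - 1))) = cUp n p P ν (p (n - 1))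
        from rfl, cUp_p hp P ν (by omega)] at hb
    show (a, b) ∈ (if r = r then R0 else Rd)
    rw [if_pos rfl]
    exact h2 a ha' b hb'
  · -- ∀(q, q)
    exact fun a ha => ha
  · -- disjointness
    intro a ha
    have ha' : a ∈ P j := by
      rwa [show (cM n p r P ν R0 Rd).etermI (atomE (p j)) = cUp n p P ν (p j) from rfl,
        cUp_p hp P ν (lt_trans hjk hk)] at ha
    show a ∉ cUp n p P ν (p k)
    rw [cUp_p hp P ν hk]
    exact h3 j k hjk hk a ha'

/-- The set `Δᵢ`. -/
def DeltaSet (n : ℕ) (p : ℕ → ℕ) (r i : ℕ) : Set Formula :=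
  GammaSet n p r \
    {Formula.al (atomE (p i)) (ETerm.ex (Lit.pos (p (i + 1))) (BLit.pos r))}

lemma sat_E {n : ℕ} {p : ℕ → ℕ} (r : ℕ) (hn : 2 ≤ n)
    (hp : ∀ i < n, ∀ j < n, p i = p j → i = j) (i : ℕ) (ν : ℕ → Set ℕ) :
    (cM n p r (fun j => {j}) ν (chainE n) ∅).SatSet (DeltaSet n p r i) := by
  apply cM_satDelta r hn hp i
  · intro j hj _ a ha
    rw [Set.mem_singleton_iff] at ha
    exact ⟨j + 1, rfl, Or.inl ⟨by rw [ha], hj⟩⟩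
  · intro a ha b hb
    rw [Set.mem_singleton_iff] at ha hb
    exact Or.inr ⟨ha, hb⟩
  · intro j k hjk hk a ha hb
    rw [Set.mem_singleton_iff] at ha hb
    omega

lemma sat_T {n : ℕ} {p : ℕ → ℕ} (r : ℕ) (hn : 2 ≤ n)
    (hp : ∀ i < n, ∀ j < n, p i = p j → i = j) (i : ℕ) :
    (cM n p r (fun j => {j}) (fun _ => Set.univ) Set.univ Set.univ).SatSet
      (DeltaSet n p r i) := by
  apply cM_satDelta r hn hp i
  · intro j hj _ a ha
    rw [Set.mem_singleton_iff] at ha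
    exact ⟨j + 1, rfl, trivial⟩
  · intro a _ b _
    trivial
  · intro j k hjk hk a ha hb
    rw [Set.mem_singleton_iff] at ha hb
    omega

lemma sat_0 {n : ℕ} {p : ℕ → ℕ} (r : ℕ) (hn : 2 ≤ n)
    (hp : ∀ i < n, ∀ j < n, p i = p j → i = j) (i : ℕ) :
    (cM n p r (fun _ => ∅) (fun _ => ∅) ∅ ∅).SatSet (DeltaSet n p r i) := by
  apply cM_satDelta r hn hp i
  · intro j _ _ a ha
    exact absurd ha (Set.notMem_empty a)
  · intro a ha
    exact absurd ha (Set.notMem_empty a)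
  · intro j k _ _ a ha
    exact absurd ha (Set.notMem_empty a)

lemma sat_1 {n : ℕ} {p : ℕ → ℕ} (r : ℕ) (hn : 2 ≤ n)
    (hp : ∀ i < n, ∀ j < n, p i = p j → i = j) {i : ℕ} (hi : i + 1 < n) :
    (cM n p r (fun j => if j ≤ i then {j} else ∅) (fun _ => ∅) (rOne i) ∅).SatSet
      (DeltaSet n p r i) := by
  apply cM_satDelta r hn hp i
  · intro j hj hji a ha
    by_cases hjile : j ≤ i
    · rw [if_pos hjile, Set.mem_singleton_iff] at ha
      have hj1 : j + 1 ≤ i := by omega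
      exact ⟨j + 1, by rw [if_pos hj1]; rfl, ⟨by rw [ha], hj1⟩⟩
    · rw [if_neg hjile] at ha
      exact absurd ha (Set.notMem_empty a)
  · intro a ha b hb
    rw [if_neg (by omega : ¬ n - 1 ≤ i)] at hb
    exact absurd hb (Set.notMem_empty b)
  · intro j k hjk hk a ha hb
    by_cases h1 : j ≤ i
    · by_cases h2 : k ≤ i
      · rw [if_pos h1, Set.mem_singleton_iff] at ha
        rw [if_pos h2, Set.mem_singleton_iff] at hb
        omega
      · rw [if_neg h2] at hb
        exact Set.notMem_empty a hb
    · rw [if_neg h1] at ha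
      exact Set.notMem_empty a ha

lemma sat_D {n : ℕ} {p : ℕ → ℕ} (r : ℕ) (hn : 2 ≤ n)
    (hp : ∀ i < n, ∀ j < n, p i = p j → i = j) (i : ℕ) {k : ℕ} (hk1 : 1 ≤ k) :
    (cM n p r (fun j => if j = k then {j, n} else {j}) (fun _ => ∅) (rD n k) ∅).SatSet
      (DeltaSet n p r i) := by
  have hmem : ∀ m : ℕ, m ∈ (if m = k then ({m, n} : Set ℕ) else {m}) := by
    intro m
    split
    · exact Set.mem_insert m _
    · rfl
  apply cM_satDelta r hn hp i
  · intro j hj _ a ha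
    by_cases hjk : j = k
    · rw [if_pos hjk, Set.mem_insert_iff, Set.mem_singleton_iff] at ha
      rcases ha with ha | ha
      · exact ⟨j + 1, hmem (j + 1), Or.inl ⟨by rw [ha], hj⟩⟩
      · exact ⟨j + 1, hmem (j + 1), Or.inr (Or.inr (Or.inl ⟨ha, by rw [hjk], by omega⟩))⟩
    · rw [if_neg hjk, Set.mem_singleton_iff] at ha
      exact ⟨j + 1, hmem (j + 1), Or.inl ⟨by rw [ha], hj⟩⟩
  · intro a ha b hb
    rw [if_neg (by omega : ¬ (0 : ℕ) = k), Set.mem_singleton_iff] at ha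
    subst ha
    by_cases hnk : n - 1 = k
    · rw [if_pos hnk, Set.mem_insert_iff, Set.mem_singleton_iff] at hb
      rcases hb with rfl | rfl
      · exact Or.inr (Or.inl ⟨rfl, rfl⟩)
      · exact Or.inr (Or.inr (Or.inr ⟨rfl, rfl, hnk.symm⟩))
    · rw [if_neg hnk, Set.mem_singleton_iff] at hb
      subst hb
      exact Or.inr (Or.inl ⟨rfl, rfl⟩)
  · intro j k' hjk' hk' a ha hb
    split_ifs at ha hb <;>
      simp only [Set.mem_insert_iff, Set.mem_singleton_iff] at ha hb <;>
      omega

/-- The main case analysis: every formula `∀(q, c)` entailed by `Δᵢ` is in `Γ`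
modulo the identification. -/
lemma main_al {n : ℕ} {p : ℕ → ℕ} (hn : 2 ≤ n)
    (hp : ∀ i < n, ∀ j < n, p i = p j → i = j) {r i : ℕ} (hi : i + 1 < n)
    (q : ℕ) (c : ETerm) (hc : c.isC)
    (h : Entails (DeltaSet n p r i) (Formula.al (atomE q) c)) :
    ∃ ψ ∈ GammaSet n p r, FormEquiv (Formula.al (atomE q) c) ψ := by
  classical
  cases c with
  | lit l =>
    cases l with
    | pos q' =>
      by_cases hqq : q' = q
      · subst hqq
        exact ⟨Formula.al (atomE q') (atomE q'),
          Or.inr (Or.inr (Or.inl ⟨q', rfl⟩)), Or.inl rfl⟩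
      · exfalso
        have hs := h ℕ ⟨0⟩ (cM n p r (fun j => {j}) (fun x => {_a : ℕ | x = q}) (chainE n) ∅)
          (sat_E r hn hp i _)
        by_cases hq : ∃ j, j < n ∧ q = p j
        · obtain ⟨j, hj, hqe⟩ := hq
          have h1 : j ∈ cUp n p (fun j => {j}) (fun x => {_a : ℕ | x = q}) q := by
            rw [hqe, cUp_p hp _ _ hj]; rfl
          have h2 : j ∈ cUp n p (fun j => {j}) (fun x => {_a : ℕ | x = q}) q' := hs h1
          by_cases hq' : ∃ k, k < n ∧ q' = p k
          · obtain ⟨k, hk, hqe'⟩ := hq'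
            rw [hqe', cUp_p hp _ _ hk, Set.mem_singleton_iff] at h2
            exact hqq (by rw [hqe', hqe, h2])
          · rw [cUp_np _ _ (fun k hk he => hq' ⟨k, hk, he⟩), Set.mem_setOf_eq] at h2
            exact hqq h2
        · have hnp : ∀ j, j < n → q ≠ p j := fun j hj he => hq ⟨j, hj, he⟩
          have h1 : n ∈ cUp n p (fun j => {j}) (fun x => {_a : ℕ | x = q}) q := by
            rw [cUp_np _ _ hnp]; exact rfl
          have h2 : n ∈ cUp n p (fun j => {j}) (fun x => {_a : ℕ | x = q}) q' := hs h1
          by_cases hq' : ∃ k, k < n ∧ q' = p k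
          · obtain ⟨k, hk, hqe'⟩ := hq'
            rw [hqe', cUp_p hp _ _ hk, Set.mem_singleton_iff] at h2
            omega
          · rw [cUp_np _ _ (fun k hk he => hq' ⟨k, hk, he⟩), Set.mem_setOf_eq] at h2
            exact hqq h2
    | neg q' =>
      by_cases hq : ∃ j, j < n ∧ q = p j
      · obtain ⟨j, hj, hqe⟩ := hq
        subst hqe
        by_cases hq' : ∃ k, k < n ∧ q' = p k
        · obtain ⟨k, hk, hqe'⟩ := hq'
          subst hqe'
          rcases Nat.lt_trichotomy j k with hjk | hjk | hjk
          · exact ⟨Formula.al (atomE (p j)) (ETerm.lit (Lit.neg (p k))),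
              Or.inr (Or.inr (Or.inr ⟨j, k, hjk, hk, rfl⟩)), Or.inl rfl⟩
          · exfalso
            subst hjk
            have hs := h ℕ ⟨0⟩ (cM n p r (fun j => {j}) (fun _ => Set.univ) (chainE n) ∅)
              (sat_E r hn hp i _)
            have h1 : j ∈ cUp n p (fun j => {j}) (fun _ => Set.univ) (p j) := by
              rw [cUp_p hp _ _ hj]; rfl
            exact hs h1 h1
          · exact ⟨Formula.al (atomE (p k)) (ETerm.lit (Lit.neg (p j))),
              Or.inr (Or.inr (Or.inr ⟨k, j, hjk, hj, rfl⟩)), Or.inr rfl⟩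
        · exfalso
          have hnp' : ∀ k, k < n → q' ≠ p k := fun k hk he => hq' ⟨k, hk, he⟩
          have hs := h ℕ ⟨0⟩ (cM n p r (fun j => {j}) (fun _ => Set.univ) (chainE n) ∅)
            (sat_E r hn hp i _)
          have h1 : j ∈ cUp n p (fun j => {j}) (fun _ => Set.univ) (p j) := by
            rw [cUp_p hp _ _ hj]; rfl
          have h2 : j ∈ cUp n p (fun j => {j}) (fun _ => Set.univ) q' := by
            rw [cUp_np _ _ hnp']; trivial
          exact hs h1 h2
      · exfalso
        have hnp : ∀ j, j < n → q ≠ p j := fun j hj he => hq ⟨j, hj, he⟩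
        have hs := h ℕ ⟨0⟩ (cM n p r (fun j => {j}) (fun _ => Set.univ) (chainE n) ∅)
          (sat_E r hn hp i _)
        by_cases hq' : ∃ k, k < n ∧ q' = p k
        · obtain ⟨k, hk, hqe'⟩ := hq'
          have h1 : k ∈ cUp n p (fun j => {j}) (fun _ => Set.univ) q := by
            rw [cUp_np _ _ hnp]; trivial
          have h2 : k ∈ cUp n p (fun j => {j}) (fun _ => Set.univ) q' := by
            rw [hqe', cUp_p hp _ _ hk]; rfl
          exact hs h1 h2
        · have h1 : 0 ∈ cUp n p (fun j => {j}) (fun _ => Set.univ) q := by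
            rw [cUp_np _ _ hnp]; trivial
          have h2 : 0 ∈ cUp n p (fun j => {j}) (fun _ => Set.univ) q' := by
            rw [cUp_np _ _ (fun k hk he => hq' ⟨k, hk, he⟩)]; trivial
          exact hs h1 h2
  | ex l t =>
    cases l with
    | neg q' => exact hc.elim
    | pos q' =>
      cases t with
      | neg s =>
        exfalso
        have hs := h ℕ ⟨0⟩ (cM n p r (fun j => {j}) (fun _ => Set.univ) Set.univ Set.univ)
          (sat_T r hn hp i)
        obtain ⟨a, ha⟩ : ∃ a, a ∈ cUp n p (fun j => {j}) (fun _ => Set.univ) q := by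
          by_cases hq : ∃ j, j < n ∧ q = p j
          · obtain ⟨j, hj, hqe⟩ := hq
            exact ⟨j, by rw [hqe, cUp_p hp _ _ hj]; rfl⟩
          · exact ⟨0, by rw [cUp_np _ _ (fun k hk he => hq ⟨k, hk, he⟩)]; trivial⟩
        obtain ⟨b, hb, hab⟩ := hs ha
        exact hab (by
          show (a, b) ∈ (if s = r then (Set.univ : Set (ℕ × ℕ)) else Set.univ)
          split <;> trivial)
      | pos s =>
        by_cases hsr : s = r
        · subst hsr
          by_cases hq : ∃ j, j < n ∧ q = p j
          · obtain ⟨j, hj, hqe⟩ := hq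
            subst hqe
            by_cases hq' : ∃ k, k < n ∧ q' = p k
            · obtain ⟨k, hk, hqe'⟩ := hq'
              subst hqe'
              by_cases hkj : k = j + 1
              · subst hkj
                exact ⟨Formula.al (atomE (p j)) (ETerm.ex (Lit.pos (p (j + 1))) (BLit.pos s)),
                  Or.inl ⟨j, hk, rfl⟩, Or.inl rfl⟩
              · by_cases hj0 : j = 0 ∧ k = n - 1
                · exfalso
                  have hs := h ℕ ⟨0⟩
                    (cM n p s (fun j => if j ≤ i then {j} else ∅) (fun _ => ∅) (rOne i) ∅)
                    (sat_1 s hn hp hi)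
                  have h1 : (0 : ℕ) ∈ cUp n p (fun j => if j ≤ i then {j} else ∅)
                      (fun _ => ∅) (p j) := by
                    rw [hj0.1, cUp_p hp _ _ (by omega : (0:ℕ) < n),
                      if_pos (by omega : (0:ℕ) ≤ i)]
                    rfl
                  obtain ⟨b, hb, -⟩ := hs h1
                  have hb2 : b ∈ cUp n p (fun j => if j ≤ i then {j} else ∅)
                      (fun _ => ∅) (p k) := hb
                  rw [hj0.2, cUp_p hp _ _ (by omega : n - 1 < n),
                    if_neg (by omega : ¬ n - 1 ≤ i)] at hb2
                  exact Set.notMem_empty b hb2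
                · exfalso
                  have hs := h ℕ ⟨0⟩ (cM n p s (fun j => {j}) (fun _ => ∅) (chainE n) ∅)
                    (sat_E s hn hp i _)
                  have h1 : j ∈ cUp n p (fun j => {j}) (fun _ => ∅) (p j) := by
                    rw [cUp_p hp _ _ hj]; rfl
                  obtain ⟨b, hb, hab⟩ := hs h1
                  have hb2 : b ∈ cUp n p (fun j => {j}) (fun _ => ∅) (p k) := hb
                  rw [cUp_p hp _ _ hk, Set.mem_singleton_iff] at hb2
                  have hab' : (j, b) ∈ chainE n := by
                    have h' : (j, b) ∈ (if s = s then chainE n else (∅ : Set (ℕ × ℕ))) := hab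
                    rwa [if_pos rfl] at h'
                  rcases hab' with ⟨h1', h2'⟩ | ⟨h1', h2'⟩
                  · exact hkj (by omega)
                  · exact hj0 ⟨h1', by omega⟩
            · exfalso
              have hnp' : ∀ k, k < n → q' ≠ p k := fun k hk he => hq' ⟨k, hk, he⟩
              have hs := h ℕ ⟨0⟩ (cM n p s (fun j => {j}) (fun _ => ∅) (chainE n) ∅)
                (sat_E s hn hp i _)
              have h1 : j ∈ cUp n p (fun j => {j}) (fun _ => ∅) (p j) := by
                rw [cUp_p hp _ _ hj]; rfl
              obtain ⟨b, hb, -⟩ := hs h1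
              have hb2 : b ∈ cUp n p (fun j => {j}) (fun _ => ∅) q' := hb
              rw [cUp_np _ _ hnp'] at hb2
              exact Set.notMem_empty b hb2
          · exfalso
            have hnp : ∀ j, j < n → q ≠ p j := fun j hj he => hq ⟨j, hj, he⟩
            have hs := h ℕ ⟨0⟩ (cM n p s (fun j => {j}) (fun _ => ({n} : Set ℕ)) (chainE n) ∅)
              (sat_E s hn hp i _)
            have h1 : n ∈ cUp n p (fun j => {j}) (fun _ => ({n} : Set ℕ)) q := by
              rw [cUp_np _ _ hnp]; rfl
            obtain ⟨b, hb, hab⟩ := hs h1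
            have hab' : (n, b) ∈ chainE n := by
              have h' : (n, b) ∈ (if s = s then chainE n else (∅ : Set (ℕ × ℕ))) := hab
              rwa [if_pos rfl] at h'
            rcases hab' with ⟨h1', h2'⟩ | ⟨h1', h2'⟩ <;> omega
        · exfalso
          have hs := h ℕ ⟨0⟩ (cM n p r (fun j => {j}) (fun _ => Set.univ) (chainE n) ∅)
            (sat_E r hn hp i _)
          obtain ⟨a, ha⟩ : ∃ a, a ∈ cUp n p (fun j => {j}) (fun _ => Set.univ) q := by
            by_cases hq : ∃ j, j < n ∧ q = p j
            · obtain ⟨j, hj, hqe⟩ := hq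
              exact ⟨j, by rw [hqe, cUp_p hp _ _ hj]; rfl⟩
            · exact ⟨0, by rw [cUp_np _ _ (fun k hk he => hq ⟨k, hk, he⟩)]; trivial⟩
          obtain ⟨b, hb, hab⟩ := hs ha
          have hab' : (a, b) ∈ (∅ : Set (ℕ × ℕ)) := by
            have h' : (a, b) ∈ (if s = r then chainE n else (∅ : Set (ℕ × ℕ))) := hab
            rwa [if_neg hsr] at h'
          exact Set.notMem_empty _ hab'
  | al l t =>
    cases l with
    | neg q' => exact hc.elim
    | pos q' =>
      cases t with
      | neg s =>
        exfalso
        have hs := h ℕ ⟨0⟩ (cM n p r (fun j => {j}) (fun _ => Set.univ) Set.univ Set.univ)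
          (sat_T r hn hp i)
        obtain ⟨a, ha⟩ : ∃ a, a ∈ cUp n p (fun j => {j}) (fun _ => Set.univ) q := by
          by_cases hq : ∃ j, j < n ∧ q = p j
          · obtain ⟨j, hj, hqe⟩ := hq
            exact ⟨j, by rw [hqe, cUp_p hp _ _ hj]; rfl⟩
          · exact ⟨0, by rw [cUp_np _ _ (fun k hk he => hq ⟨k, hk, he⟩)]; trivial⟩
        obtain ⟨b, hb⟩ : ∃ b, b ∈ cUp n p (fun j => {j}) (fun _ => Set.univ) q' := by
          by_cases hq' : ∃ k, k < n ∧ q' = p k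
          · obtain ⟨k, hk, hqe'⟩ := hq'
            exact ⟨k, by rw [hqe', cUp_p hp _ _ hk]; rfl⟩
          · exact ⟨0, by rw [cUp_np _ _ (fun k hk he => hq' ⟨k, hk, he⟩)]; trivial⟩
        have hab := hs ha b hb
        exact hab (by
          show (a, b) ∈ (if s = r then (Set.univ : Set (ℕ × ℕ)) else Set.univ)
          split <;> trivial)
      | pos s =>
        by_cases hsr : s = r
        · subst hsr
          by_cases hq : ∃ j, j < n ∧ q = p j
          · obtain ⟨j, hj, hqe⟩ := hq
            subst hqe
            by_cases hq' : ∃ k, k < n ∧ q' = p k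
            · obtain ⟨k, hk, hqe'⟩ := hq'
              subst hqe'
              by_cases hj0 : j = 0 ∧ k = n - 1
              · obtain ⟨rfl, rfl⟩ := hj0
                exact ⟨Formula.al (atomE (p 0)) (ETerm.al (Lit.pos (p (n - 1))) (BLit.pos s)),
                  Or.inr (Or.inl rfl), Or.inl rfl⟩
              · by_cases hkj : k = j + 1
                · exfalso
                  have hs := h ℕ ⟨0⟩
                    (cM n p s (fun m => if m = k then {m, n} else {m}) (fun _ => ∅) (rD n k) ∅)
                    (sat_D s hn hp i (by omega : 1 ≤ k))
                  have h1 : j ∈ cUp n p (fun m => if m = k then {m, n} else {m})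
                      (fun _ => ∅) (p j) := by
                    rw [cUp_p hp _ _ hj, if_neg (by omega : ¬ j = k)]; rfl
                  have h2 : n ∈ cUp n p (fun m => if m = k then {m, n} else {m})
                      (fun _ => ∅) (p k) := by
                    rw [cUp_p hp _ _ hk, if_pos rfl]
                    exact Or.inr rfl
                  have hab := hs h1 n h2
                  have hab' : (j, n) ∈ rD n k := by
                    have h' : (j, n) ∈ (if s = s then rD n k else (∅ : Set (ℕ × ℕ))) := hab
                    rwa [if_pos rfl] at h'
                  rcases hab' with ⟨h1', h2'⟩ | ⟨h1', h2'⟩ | ⟨h1', h2', h3'⟩ | ⟨h1', h2', h3'⟩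
                  · omega
                  · omega
                  · omega
                  · exact hj0 ⟨h1', h3'⟩
                · exfalso
                  have hs := h ℕ ⟨0⟩ (cM n p s (fun j => {j}) (fun _ => ∅) (chainE n) ∅)
                    (sat_E s hn hp i _)
                  have h1 : j ∈ cUp n p (fun j => {j}) (fun _ => ∅) (p j) := by
                    rw [cUp_p hp _ _ hj]; rfl
                  have h2 : k ∈ cUp n p (fun j => {j}) (fun _ => ∅) (p k) := by
                    rw [cUp_p hp _ _ hk]; rfl
                  have hab := hs h1 k h2
                  have hab' : (j, k) ∈ chainE n := by
                    have h' : (j, k) ∈ (if s = s then chainE n else (∅ : Set (ℕ × ℕ))) := hab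
                    rwa [if_pos rfl] at h'
                  rcases hab' with ⟨h1', h2'⟩ | ⟨h1', h2'⟩
                  · exact hkj h1'
                  · exact hj0 ⟨h1', h2'⟩
            · exfalso
              have hnp' : ∀ k, k < n → q' ≠ p k := fun k hk he => hq' ⟨k, hk, he⟩
              have hs := h ℕ ⟨0⟩ (cM n p s (fun j => {j}) (fun _ => ({n} : Set ℕ)) (chainE n) ∅)
                (sat_E s hn hp i _)
              have h1 : j ∈ cUp n p (fun j => {j}) (fun _ => ({n} : Set ℕ)) (p j) := by
                rw [cUp_p hp _ _ hj]; rfl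
              have h2 : n ∈ cUp n p (fun j => {j}) (fun _ => ({n} : Set ℕ)) q' := by
                rw [cUp_np _ _ hnp']; rfl
              have hab := hs h1 n h2
              have hab' : (j, n) ∈ chainE n := by
                have h' : (j, n) ∈ (if s = s then chainE n else (∅ : Set (ℕ × ℕ))) := hab
                rwa [if_pos rfl] at h'
              rcases hab' with ⟨h1', h2'⟩ | ⟨h1', h2'⟩ <;> omega
          · exfalso
            have hnp : ∀ j, j < n → q ≠ p j := fun j hj he => hq ⟨j, hj, he⟩
            have hs := h ℕ ⟨0⟩ (cM n p s (fun j => {j}) (fun _ => ({n} : Set ℕ)) (chainE n) ∅)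
              (sat_E s hn hp i _)
            have h1 : n ∈ cUp n p (fun j => {j}) (fun _ => ({n} : Set ℕ)) q := by
              rw [cUp_np _ _ hnp]; rfl
            obtain ⟨b, hb⟩ : ∃ b, b ∈ cUp n p (fun j => {j}) (fun _ => ({n} : Set ℕ)) q' := by
              by_cases hq' : ∃ k, k < n ∧ q' = p k
              · obtain ⟨k, hk, hqe'⟩ := hq'
                exact ⟨k, by rw [hqe', cUp_p hp _ _ hk]; rfl⟩
              · exact ⟨n, by rw [cUp_np _ _ (fun k hk he => hq' ⟨k, hk, he⟩)]; rfl⟩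
            have hab := hs h1 b hb
            have hab' : (n, b) ∈ chainE n := by
              have h' : (n, b) ∈ (if s = s then chainE n else (∅ : Set (ℕ × ℕ))) := hab
              rwa [if_pos rfl] at h'
            rcases hab' with ⟨h1', h2'⟩ | ⟨h1', h2'⟩ <;> omega
        · exfalso
          have hs := h ℕ ⟨0⟩ (cM n p r (fun j => {j}) (fun _ => Set.univ) (chainE n) ∅)
            (sat_E r hn hp i _)
          obtain ⟨a, ha⟩ : ∃ a, a ∈ cUp n p (fun j => {j}) (fun _ => Set.univ) q := by
            by_cases hq : ∃ j, j < n ∧ q = p j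
            · obtain ⟨j, hj, hqe⟩ := hq
              exact ⟨j, by rw [hqe, cUp_p hp _ _ hj]; rfl⟩
            · exact ⟨0, by rw [cUp_np _ _ (fun k hk he => hq ⟨k, hk, he⟩)]; trivial⟩
          obtain ⟨b, hb⟩ : ∃ b, b ∈ cUp n p (fun j => {j}) (fun _ => Set.univ) q' := by
            by_cases hq' : ∃ k, k < n ∧ q' = p k
            · obtain ⟨k, hk, hqe'⟩ := hq'
              exact ⟨k, by rw [hqe', cUp_p hp _ _ hk]; rfl⟩
            · exact ⟨0, by rw [cUp_np _ _ (fun k hk he => hq' ⟨k, hk, he⟩)]; trivial⟩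
          have hab := hs ha b hb
          have hab' : (a, b) ∈ (∅ : Set (ℕ × ℕ)) := by
            have h' : (a, b) ∈ (if s = r then chainE n else (∅ : Set (ℕ × ℕ))) := hab
            rwa [if_neg hsr] at h'
          exact Set.notMem_empty _ hab'

end Statement14

/-- every R-formula entailed by `Δᵢ` already belongs to `Γ`
(modulo the identification). -/
theorem delta_entails_mem_gamma (n : ℕ) (hn : 2 ≤ n) (p : ℕ → ℕ)
    (hp : ∀ i < n, ∀ j < n, p i = p j → i = j) (r : ℕ) :
    ∀ i, i + 1 < n → ∀ φ : Formula, φ ∈ FragR →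
      Entails (GammaSet n p r \
          {Formula.al (atomE (p i)) (ETerm.ex (Lit.pos (p (i + 1))) (BLit.pos r))}) φ →
      ∃ ψ ∈ GammaSet n p r, FormEquiv φ ψ := by
  intro i hi φ hφ hent
  obtain ⟨q0, c, hc, hsh⟩ := hφ
  have hent' : Entails (DeltaSet n p r i) φ := hent
  rcases hsh with rfl | rfl | rfl | rfl
  · exfalso
    have hs := hent' ℕ ⟨0⟩ (cM n p r (fun _ => ∅) (fun _ => ∅) ∅ ∅) (sat_0 r hn hp i)
    obtain ⟨a, ha, -⟩ := hs
    have ha' : (∃ j, j < n ∧ q0 = p j ∧ a ∈ (∅ : Set ℕ)) ∨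
        ((∀ j, j < n → q0 ≠ p j) ∧ a ∈ (∅ : Set ℕ)) := ha
    rcases ha' with ⟨_, _, _, hP⟩ | ⟨_, hP⟩ <;> exact Set.notMem_empty a hP
  · exfalso
    have hs := hent' ℕ ⟨0⟩ (cM n p r (fun _ => ∅) (fun _ => ∅) ∅ ∅) (sat_0 r hn hp i)
    obtain ⟨a, -, ha⟩ := hs
    have ha' : (∃ j, j < n ∧ q0 = p j ∧ a ∈ (∅ : Set ℕ)) ∨
        ((∀ j, j < n → q0 ≠ p j) ∧ a ∈ (∅ : Set ℕ)) := ha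
    rcases ha' with ⟨_, _, _, hP⟩ | ⟨_, hP⟩ <;> exact Set.notMem_empty a hP
  · exact main_al hn hp hi q0 c hc hent'
  · have hent2 : Entails (DeltaSet n p r i) (Formula.al (atomE q0) c.bar) := by
      intro A hA M hM
      have hs := hent' A hA M hM
      intro a ha
      rw [Interp.etermI_bar]
      intro hac
      exact hs hac ha
    obtain ⟨ψ, hmem, hequiv⟩ := main_al hn hp hi q0 c.bar (ETerm.isC_bar hc) hent2
    refine ⟨ψ, hmem, ?_⟩
    have hswap : Formula.al (atomE q0) c.bar
        = (Formula.al c (ETerm.lit (Lit.neg q0))).swap := rfl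
    rcases hequiv with rfl | rfl
    · exact Or.inr hswap
    · exact Or.inl (by rw [hswap, Formula.swap_swap])

end Syllogistic
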